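/- There exists a set of (r-1)2^d points in Z^d such that for every partition into r parts, the intersection of the convex hulls of the parts contains no integer point; hence the integer Tverberg number satisfies L(r,d) > (r-1)2^d. -/

import Mathlib

/-- If all points of `S` have 0/1 coordinates, then any point with integer
coordinates in the convex hull of `S` is itself in `S`. -/
lemma int_mem_convexHull_zero_one {d : ℕ} {S : Set (Fin d → ℝ)} {p : Fin d → ℝ}
    (hS : ∀ x ∈ S, ∀ k, x k = 0 ∨ x k = 1)
    (hp : ∀ k, ∃ m : ℤ, p k = (m : ℝ))
    (hmem : p ∈ convexHull ℝ S) : p ∈ S := by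
  rw [convexHull_eq] at hmem
  obtain ⟨ι, t, w, z, hw, hw1, hz, hc⟩ := hmem
  rw [Finset.centerMass_eq_of_sum_1 _ _ hw1] at hc
  obtain ⟨i₀, hi₀t, hi₀⟩ := Finset.exists_ne_zero_of_sum_ne_zero
    (by rw [hw1]; norm_num : ∑ i ∈ t, w i ≠ 0)
  suffices h : z i₀ = p by rw [← h]; exact hz i₀ hi₀t
  funext k
  have hsum : ∑ i ∈ t, w i * z i k = p k := by
    rw [← hc]; simp [Finset.sum_apply]
  have hlb : ∀ i ∈ t, 0 ≤ w i * z i k := by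
    intro i hi
    rcases hS (z i) (hz i hi) k with h | h <;> simp [h, hw i hi]
  have hub : ∀ i ∈ t, w i * z i k ≤ w i := by
    intro i hi
    rcases hS (z i) (hz i hi) k with h | h <;> simp [h, hw i hi]
  have hp0 : (0 : ℝ) ≤ p k := hsum ▸ Finset.sum_nonneg hlb
  have hp1 : p k ≤ 1 := by
    rw [← hsum, ← hw1]; exact Finset.sum_le_sum hub
  obtain ⟨m, hm⟩ := hp k
  have hm01 : m = 0 ∨ m = 1 := by
    rw [hm] at hp0 hp1
    have h0 : (0 : ℤ) ≤ m := by exact_mod_cast hp0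
    have h1 : m ≤ 1 := by exact_mod_cast hp1
    omega
  rcases hm01 with rfl | rfl
  · -- p k = 0
    have hpk : p k = 0 := by rw [hm]; norm_num
    rw [hpk] at hsum
    have := (Finset.sum_eq_zero_iff_of_nonneg hlb).mp hsum i₀ hi₀t
    rcases mul_eq_zero.mp this with h | h
    · exact absurd h hi₀
    · rw [h, hpk]
  · -- p k = 1
    have hpk : p k = 1 := by rw [hm]; norm_num
    have hsum2 : ∑ i ∈ t, (w i - w i * z i k) = 0 := by
      rw [Finset.sum_sub_distrib, hw1, hsum, hpk, sub_self]
    have hnn : ∀ i ∈ t, 0 ≤ w i - w i * z i k := fun i hi => by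
      have := hub i hi; linarith
    have := (Finset.sum_eq_zero_iff_of_nonneg hnn).mp hsum2 i₀ hi₀t
    have hz1 : w i₀ * z i₀ k = w i₀ * 1 := by linarith
    rw [mul_left_cancel₀ hi₀ hz1, hpk]

/-- Lower bound for the integer Tverberg number: there is a family of (r-1)·2^d lattice
points in ℤ^d (viewed in ℝ^d) such that no partition into r parts has a lattice point
common to the convex hulls of all parts; hence L(r,d) > (r-1)·2^d. -/
theorem integer_tverberg_lower_bound (d r : ℕ) (hd : 1 ≤ d) (hr : 2 ≤ r) :
    ∃ f : Fin ((r - 1) * 2 ^ d) → (Fin d → ℝ),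
      (∀ i k, ∃ m : ℤ, f i k = (m : ℝ)) ∧
      ∀ c : Fin ((r - 1) * 2 ^ d) → Fin r,
        ¬ ∃ p : Fin d → ℝ, (∀ k, ∃ m : ℤ, p k = (m : ℝ)) ∧
          ∀ j : Fin r, p ∈ convexHull ℝ (f '' {i | c i = j}) := by
  have h2d : 0 < 2 ^ d := Nat.pow_pos (n := d) (by norm_num)
  refine ⟨fun i k => if Nat.testBit (i.val % 2 ^ d) k.val then 1 else 0, ?_, ?_⟩
  · intro i k
    by_cases h : Nat.testBit (i.val % 2 ^ d) k.val
    · exact ⟨1, by simp [h]⟩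
    · exact ⟨0, by simp [h]⟩
  · rintro c ⟨p, hp, hj⟩
    set f : Fin ((r - 1) * 2 ^ d) → (Fin d → ℝ) :=
      fun i k => if Nat.testBit (i.val % 2 ^ d) k.val then 1 else 0 with hf
    have hS : ∀ (A : Set (Fin ((r - 1) * 2 ^ d))), ∀ x ∈ f '' A, ∀ k, x k = 0 ∨ x k = 1 := by
      rintro A x ⟨i, _, rfl⟩ k
      by_cases h : Nat.testBit (i.val % 2 ^ d) k.val <;> simp [hf, h]
    have key : ∀ j : Fin r, ∃ i, c i = j ∧ f i = p := by
      intro j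
      obtain ⟨i, hi, hfi⟩ := int_mem_convexHull_zero_one (hS _) hp (hj j)
      exact ⟨i, hi, hfi⟩
    choose g hgc hgf using key
    have hmod : ∀ j j' : Fin r, (g j).val % 2 ^ d = (g j').val % 2 ^ d := by
      intro j j'
      apply Nat.eq_of_testBit_eq
      intro k
      by_cases hk : k < d
      · have h1 : f (g j) ⟨k, hk⟩ = f (g j') ⟨k, hk⟩ := by rw [hgf j, hgf j']
        have hmt : ∀ n : ℕ, (n % 2 ^ d).testBit k = n.testBit k := fun n => by
          simp [Nat.testBit_mod_two_pow, hk]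
        rw [hmt, hmt]
        by_cases a : Nat.testBit (g j).val k <;>
          by_cases b : Nat.testBit (g j').val k <;>
            simp [hf, hmt, a, b] at h1 ⊢
      · have hle : 2 ^ d ≤ 2 ^ k := Nat.pow_le_pow_right (by norm_num) (le_of_not_gt hk)
        rw [Nat.testBit_eq_false_of_lt (lt_of_lt_of_le (Nat.mod_lt _ h2d) hle),
          Nat.testBit_eq_false_of_lt (lt_of_lt_of_le (Nat.mod_lt _ h2d) hle)]
    have hdiv : ∀ j : Fin r, (g j).val / 2 ^ d < r - 1 := by
      intro j
      rw [Nat.div_lt_iff_lt_mul h2d]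
      exact (g j).isLt
    let h : Fin r → Fin (r - 1) := fun j => ⟨(g j).val / 2 ^ d, hdiv j⟩
    have hinj : Function.Injective h := by
      intro j j' hjj
      have hdiveq : (g j).val / 2 ^ d = (g j').val / 2 ^ d := by
        simpa [h] using congrArg Fin.val hjj
      have hvaleq : (g j).val = (g j').val := by
        have e1 := Nat.div_add_mod (g j).val (2 ^ d)
        have e2 := Nat.div_add_mod (g j').val (2 ^ d)
        rw [← e1, ← e2, hdiveq, hmod j j']
      have : g j = g j' := Fin.ext hvaleq
      rw [← hgc j, ← hgc j', this]
    have hcard := Fintype.card_le_of_injective h hinj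
    simp only [Fintype.card_fin] at hcard
    omega
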